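/- Let G be a connected chordal graph with Diam(G) ≤ 3 containing two disjoint cliques W₁ and W₂ each of which dominates G. Then the graph G′ obtained by adding for each i a vertex wᵢ adjacent to all of Wᵢ and a further vertex wᵢ′ adjacent only to wᵢ is chordal, has Rad(G′) = 3 and Diam(G′) = 5, and its center is exactly V(G). -/

import Mathlib

open SimpleGraph

variable {V : Type*}

noncomputable instance (priority := low) instFintypeSubsetOfFinite [Finite V] (s : Set V) :
    Fintype ↥s := Fintype.ofFinite _

/-- Eccentricity of a vertex: max distance to any vertex. -/
noncomputable def ecc [Fintype V] (G : SimpleGraph V) (x : V) : ℕ :=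
  Finset.univ.sup (G.dist x)

/-- Radius: minimum eccentricity. -/
noncomputable def grad [Fintype V] (G : SimpleGraph V) : ℕ :=
  sInf (Set.range (ecc G))

/-- Diameter: maximum eccentricity. -/
noncomputable def gdiam [Fintype V] (G : SimpleGraph V) : ℕ :=
  Finset.univ.sup (ecc G)

/-- The center: vertices of minimum eccentricity. -/
def center [Fintype V] (G : SimpleGraph V) : Set V :=
  {x | ecc G x = grad G}

/-- `G` has an induced cycle of length `n`. -/
def HasInducedCycle (G : SimpleGraph V) (n : ℕ) : Prop :=
  3 ≤ n ∧ ∃ f : ZMod n → V, Function.Injective f ∧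
    ∀ i j : ZMod n, G.Adj (f i) (f j) ↔ (i = j + 1 ∨ j = i + 1)

/-- `G` is `k`-chordal: no induced cycle of length greater than `k`. -/
def KChordal (G : SimpleGraph V) (k : ℕ) : Prop :=
  ∀ n, k < n → ¬ HasInducedCycle G n

/-- `G` together with `w₁, w₁', w₂, w₂'` (encoded as `0, 1, 2, 3`), where `wᵢ` is joined to
all of `Wᵢ` and to `wᵢ'`. -/
def addTwoPendCliques (G : SimpleGraph V) (W₁ W₂ : Set V) : SimpleGraph (V ⊕ Fin 4) :=
  SimpleGraph.fromRel (fun x y => match x, y with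
    | Sum.inl a, Sum.inl b => G.Adj a b
    | Sum.inr i, Sum.inl a => (i = 0 ∧ a ∈ W₁) ∨ (i = 2 ∧ a ∈ W₂)
    | Sum.inr i, Sum.inr j => (i = 0 ∧ j = 1) ∨ (i = 2 ∧ j = 3)
    | _, _ => False)


open Sum

section Aux
variable {V : Type*} {G : SimpleGraph V} {W₁ W₂ : Set V}

lemma adj_ll {a b : V} :
    (addTwoPendCliques G W₁ W₂).Adj (inl a) (inl b) ↔ G.Adj a b := by
  constructor
  · rintro ⟨hne, h | h⟩
    · exact h
    · exact h.symm
  · exact fun h => ⟨by simpa using h.ne, Or.inl h⟩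

lemma adj_0l {a : V} :
    (addTwoPendCliques G W₁ W₂).Adj (inr 0) (inl a) ↔ a ∈ W₁ := by
  constructor
  · rintro ⟨hne, (⟨h, ha⟩ | ⟨h, ha⟩) | h⟩
    · exact ha
    · exact absurd h (by decide)
    · exact h.elim
  · exact fun h => ⟨by simp, Or.inl (Or.inl ⟨rfl, h⟩)⟩

lemma adj_2l {a : V} :
    (addTwoPendCliques G W₁ W₂).Adj (inr 2) (inl a) ↔ a ∈ W₂ := by
  constructor
  · rintro ⟨hne, (⟨h, ha⟩ | ⟨h, ha⟩) | h⟩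
    · exact absurd h (by decide)
    · exact ha
    · exact h.elim
  · exact fun h => ⟨by simp, Or.inl (Or.inr ⟨rfl, h⟩)⟩

lemma adj_01 : (addTwoPendCliques G W₁ W₂).Adj (inr 0) (inr 1) :=
  ⟨by simp, Or.inl (Or.inl ⟨rfl, rfl⟩)⟩

lemma adj_23 : (addTwoPendCliques G W₁ W₂).Adj (inr 2) (inr 3) :=
  ⟨by simp, Or.inl (Or.inr ⟨rfl, rfl⟩)⟩

lemma nbr1 {x : V ⊕ Fin 4} (h : (addTwoPendCliques G W₁ W₂).Adj x (inr 1)) : x = inr 0 := by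
  rcases x with a | i
  · rcases h with ⟨hne, h | h⟩
    · exact h.elim
    · rcases h with ⟨h, _⟩ | ⟨h, _⟩ <;> exact absurd h (by decide)
  · rcases h with ⟨hne, h | h⟩
    · rcases h with ⟨h1, h2⟩ | ⟨h1, h2⟩
      · rw [h1]
      · exact absurd h2 (by decide)
    · rcases h with ⟨h1, h2⟩ | ⟨h1, h2⟩ <;> exact absurd h1 (by decide)

lemma nbr3 {x : V ⊕ Fin 4} (h : (addTwoPendCliques G W₁ W₂).Adj x (inr 3)) : x = inr 2 := by
  rcases x with a | i
  · rcases h with ⟨hne, h | h⟩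
    · exact h.elim
    · rcases h with ⟨h, _⟩ | ⟨h, _⟩ <;> exact absurd h (by decide)
  · rcases h with ⟨hne, h | h⟩
    · rcases h with ⟨h1, h2⟩ | ⟨h1, h2⟩
      · exact absurd h2 (by decide)
      · rw [h1]
    · rcases h with ⟨h1, h2⟩ | ⟨h1, h2⟩ <;> exact absurd h1 (by decide)

lemma nbr0 {x : V ⊕ Fin 4} (h : (addTwoPendCliques G W₁ W₂).Adj x (inr 0)) :
    x = inr 1 ∨ ∃ a ∈ W₁, x = inl a := by
  rcases x with a | i
  · rcases h with ⟨hne, h | h⟩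
    · exact h.elim
    · rcases h with ⟨h1, h2⟩ | ⟨h1, h2⟩
      · exact Or.inr ⟨a, h2, rfl⟩
      · exact absurd h1 (by decide)
  · rcases h with ⟨hne, h | h⟩
    · rcases h with ⟨h1, h2⟩ | ⟨h1, h2⟩ <;> exact absurd h2 (by decide)
    · rcases h with ⟨h1, h2⟩ | ⟨h1, h2⟩
      · exact Or.inl (by rw [h2])
      · exact absurd h1 (by decide)

lemma nbr2 {x : V ⊕ Fin 4} (h : (addTwoPendCliques G W₁ W₂).Adj x (inr 2)) :
    x = inr 3 ∨ ∃ a ∈ W₂, x = inl a := by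
  rcases x with a | i
  · rcases h with ⟨hne, h | h⟩
    · exact h.elim
    · rcases h with ⟨h1, h2⟩ | ⟨h1, h2⟩
      · exact absurd h1 (by decide)
      · exact Or.inr ⟨a, h2, rfl⟩
  · rcases h with ⟨hne, h | h⟩
    · rcases h with ⟨h1, h2⟩ | ⟨h1, h2⟩ <;> exact absurd h2 (by decide)
    · rcases h with ⟨h1, h2⟩ | ⟨h1, h2⟩
      · exact absurd h1 (by decide)
      · exact Or.inl (by rw [h2])

end Aux

section Aux2
variable {V : Type*} {G : SimpleGraph V} {W₁ W₂ : Set V}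

open Classical in
/-- Potential function used for distance lower bounds. -/
noncomputable def fpot (W₁ : Set V) : V ⊕ Fin 4 → ℕ
  | Sum.inl a => if a ∈ W₁ then 2 else 3
  | Sum.inr i => ![1, 0, 4, 5] i

lemma fpot_lip (hdisj : Disjoint W₁ W₂) {x y : V ⊕ Fin 4}
    (h : (addTwoPendCliques G W₁ W₂).Adj x y) : fpot W₁ x ≤ fpot W₁ y + 1 := by
  rcases x with a | i <;> rcases y with b | j
  · simp only [fpot]; split_ifs <;> omega
  · rcases h with ⟨-, h | h⟩
    · exact h.elim
    · rcases h with ⟨h1, h2⟩ | ⟨h1, h2⟩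
      · subst h1; simp [fpot, if_pos h2]
      · subst h1
        have : a ∉ W₁ := fun ha => (hdisj.le_bot ⟨ha, h2⟩).elim
        simp [fpot, if_neg this]
  · rcases h with ⟨-, h | h⟩
    · rcases h with ⟨h1, h2⟩ | ⟨h1, h2⟩
      · subst h1; simp [fpot, if_pos h2]
      · subst h1
        have hb : b ∉ W₁ := fun hb => (hdisj.le_bot ⟨hb, h2⟩).elim
        simp [fpot, if_neg hb]
    · exact h.elim
  · rcases h with ⟨-, h | h⟩ <;> rcases h with ⟨h1, h2⟩ | ⟨h1, h2⟩ <;>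
      subst h1 <;> subst h2 <;> simp [fpot]

lemma fpot_walk (hdisj : Disjoint W₁ W₂) {x y : V ⊕ Fin 4}
    (p : (addTwoPendCliques G W₁ W₂).Walk x y) : fpot W₁ x ≤ fpot W₁ y + p.length := by
  induction p with
  | nil => simp
  | cons h p ih =>
    have h1 := fpot_lip hdisj h
    simp only [SimpleGraph.Walk.length_cons]
    omega

lemma fpot_dist (hdisj : Disjoint W₁ W₂) (hconn : (addTwoPendCliques G W₁ W₂).Connected)
    (x y : V ⊕ Fin 4) : fpot W₁ x ≤ fpot W₁ y + (addTwoPendCliques G W₁ W₂).dist x y := by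
  obtain ⟨p, hp⟩ := hconn.exists_walk_length_eq_dist x y
  rw [← hp]
  exact fpot_walk hdisj p

end Aux2

lemma fin4cases {P : Fin 4 → Prop} (h0 : P 0) (h1 : P 1) (h2 : P 2) (h3 : P 3) : ∀ i, P i := by
  intro i
  match i with
  | 0 => exact h0
  | 1 => exact h1
  | 2 => exact h2
  | 3 => exact h3

theorem addTwoPendCliques_center [Fintype V] (G : SimpleGraph V) (hG : G.Connected)
    (hch : KChordal G 3) (hd : gdiam G ≤ 3) (W₁ W₂ : Set V) (hdisj : Disjoint W₁ W₂)
    (h1 : G.IsClique W₁) (h2 : G.IsClique W₂)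
    (hdom1 : ∀ v ∉ W₁, ∃ w ∈ W₁, G.Adj v w) (hdom2 : ∀ v ∉ W₂, ∃ w ∈ W₂, G.Adj v w) :
    KChordal (addTwoPendCliques G W₁ W₂) 3 ∧ grad (addTwoPendCliques G W₁ W₂) = 3 ∧
      gdiam (addTwoPendCliques G W₁ W₂) = 5 ∧
      _root_.center (addTwoPendCliques G W₁ W₂) = Set.range Sum.inl := by
  classical
  set H := addTwoPendCliques G W₁ W₂ with hHdef
  obtain ⟨v₀⟩ := hG.nonempty
  have hW1 : W₁.Nonempty := by
    by_cases h : v₀ ∈ W₁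
    · exact ⟨v₀, h⟩
    · obtain ⟨w, hw, -⟩ := hdom1 v₀ h; exact ⟨w, hw⟩
  have hW2 : W₂.Nonempty := by
    by_cases h : v₀ ∈ W₂
    · exact ⟨v₀, h⟩
    · obtain ⟨w, hw, -⟩ := hdom2 v₀ h; exact ⟨w, hw⟩
  obtain ⟨a₁, ha₁⟩ := hW1
  -- short walks from any `inl v` to `w₁` and `w₂`
  have wl0 : ∀ v : V, ∃ p : H.Walk (inl v) (inr 0), p.length ≤ 2 := by
    intro v
    by_cases hv : v ∈ W₁
    · exact ⟨(adj_0l.mpr hv).symm.toWalk, by simp⟩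
    · obtain ⟨b, hbW, hb⟩ := hdom1 v hv
      exact ⟨Walk.cons (adj_ll.mpr hb) (adj_0l.mpr hbW).symm.toWalk, by simp⟩
  have wl2 : ∀ v : V, ∃ p : H.Walk (inl v) (inr 2), p.length ≤ 2 := by
    intro v
    by_cases hv : v ∈ W₂
    · exact ⟨(adj_2l.mpr hv).symm.toWalk, by simp⟩
    · obtain ⟨b, hbW, hb⟩ := hdom2 v hv
      exact ⟨Walk.cons (adj_ll.mpr hb) (adj_2l.mpr hbW).symm.toWalk, by simp⟩
  have dl0 : ∀ v : V, H.dist (inl v) (inr 0) ≤ 2 := fun v => by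
    obtain ⟨p, hp⟩ := wl0 v; exact (SimpleGraph.dist_le p).trans hp
  have dl2 : ∀ v : V, H.dist (inl v) (inr 2) ≤ 2 := fun v => by
    obtain ⟨p, hp⟩ := wl2 v; exact (SimpleGraph.dist_le p).trans hp
  have dll : ∀ u v : V, H.dist (inl u) (inl v) ≤ 3 := by
    intro u v
    obtain ⟨p, hp⟩ := (hG.preconnected u v).exists_walk_length_eq_dist
    have hmap := SimpleGraph.dist_le (p.map (⟨Sum.inl, fun h => adj_ll.mpr h⟩ : G →g H))
    rw [Walk.length_map] at hmap
    calc H.dist (inl u) (inl v) ≤ p.length := hmap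
      _ = G.dist u v := hp
      _ ≤ ecc G u := Finset.le_sup (Finset.mem_univ v)
      _ ≤ gdiam G := Finset.le_sup (Finset.mem_univ u)
      _ ≤ 3 := hd
  have reach0 : ∀ x : V ⊕ Fin 4, H.Reachable (inr 0) x := by
    have rl : ∀ v : V, H.Reachable (inr 0) (inl v) := fun v => (wl0 v).choose.reverse.reachable
    rintro (v | i)
    · exact rl v
    · revert i
      refine fin4cases ?_ ?_ ?_ ?_
      · exact Reachable.refl _
      · exact adj_01.reachable
      · exact (rl a₁).trans (wl2 a₁).choose.reachable
      · exact ((rl a₁).trans (wl2 a₁).choose.reachable).trans adj_23.reachable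
  have hconn : H.Connected := (connected_iff H).mpr ⟨fun x y => (reach0 x).symm.trans (reach0 y),
    inferInstance⟩
  have dadj : ∀ {x y : V ⊕ Fin 4}, H.Adj x y → H.dist x y ≤ 1 := fun h =>
    (SimpleGraph.dist_le h.toWalk).trans (by simp)
  have d01 : H.dist (inr 0) (inr 1) ≤ 1 := dadj adj_01
  have d23 : H.dist (inr 2) (inr 3) ≤ 1 := dadj adj_23
  have d02 : H.dist (inr 0) (inr 2) ≤ 3 := by
    have := hconn.dist_triangle (u := (inr 0 : V ⊕ Fin 4)) (v := inl a₁) (w := inr 2)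
    have h0a : H.dist (inr 0) (inl a₁) ≤ 1 := dadj (adj_0l.mpr ha₁)
    have := dl2 a₁
    omega
  have d03 : H.dist (inr 0) (inr 3) ≤ 4 := by
    have := hconn.dist_triangle (u := (inr 0 : V ⊕ Fin 4)) (v := inr 2) (w := inr 3)
    omega
  have d10 : H.dist (inr 1) (inr 0) ≤ 1 := SimpleGraph.dist_comm .. ▸ d01
  have d12 : H.dist (inr 1) (inr 2) ≤ 4 := by
    have := hconn.dist_triangle (u := (inr 1 : V ⊕ Fin 4)) (v := inr 0) (w := inr 2)
    omega
  have d13 : H.dist (inr 1) (inr 3) ≤ 5 := by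
    have := hconn.dist_triangle (u := (inr 1 : V ⊕ Fin 4)) (v := inr 0) (w := inr 3)
    omega
  have d1l : ∀ v : V, H.dist (inr 1) (inl v) ≤ 3 := by
    intro v
    have := hconn.dist_triangle (u := (inr 1 : V ⊕ Fin 4)) (v := inr 0) (w := inl v)
    have h0v : H.dist (inr 0) (inl v) ≤ 2 := SimpleGraph.dist_comm .. ▸ dl0 v
    omega
  have d3l : ∀ v : V, H.dist (inr 3) (inl v) ≤ 3 := by
    intro v
    have := hconn.dist_triangle (u := (inr 3 : V ⊕ Fin 4)) (v := inr 2) (w := inl v)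
    have h32 : H.dist (inr 3) (inr 2) ≤ 1 := SimpleGraph.dist_comm .. ▸ d23
    have h2v : H.dist (inr 2) (inl v) ≤ 2 := SimpleGraph.dist_comm .. ▸ dl2 v
    omega
  -- lower bounds coming from the potential function
  have flow : ∀ x y : V ⊕ Fin 4, fpot W₁ x ≤ fpot W₁ y + H.dist x y := fun x y =>
    fpot_dist hdisj hconn x y
  have L03 : 4 ≤ H.dist (inr 0) (inr 3) := by
    have h := flow (inr 3) (inr 0)
    rw [SimpleGraph.dist_comm] at h
    simp [fpot] at h
    omega
  have L21 : 4 ≤ H.dist (inr 2) (inr 1) := by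
    have h := flow (inr 2) (inr 1)
    simp [fpot] at h
    omega
  have L13 : 5 ≤ H.dist (inr 1) (inr 3) := by
    have h := flow (inr 3) (inr 1)
    rw [SimpleGraph.dist_comm] at h
    simp [fpot] at h
    omega
  -- eccentricities
  have eccl : ∀ v : V, ecc H (inl v) = 3 := by
    intro v
    apply le_antisymm
    · apply Finset.sup_le
      rintro (u | i) -
      · exact dll v u
      · revert i
        refine fin4cases ?_ ?_ ?_ ?_
        · exact (dl0 v).trans (by norm_num)
        · have := hconn.dist_triangle (u := (inl v : V ⊕ Fin 4)) (v := inr 0) (w := inr 1)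
          have := dl0 v
          omega
        · exact (dl2 v).trans (by norm_num)
        · have := hconn.dist_triangle (u := (inl v : V ⊕ Fin 4)) (v := inr 2) (w := inr 3)
          have := dl2 v
          omega
    · by_cases hv : v ∈ W₁
      · have h := flow (inr 3) (inl v)
        rw [SimpleGraph.dist_comm] at h
        simp [fpot, if_pos hv] at h
        calc (3:ℕ) ≤ H.dist (inl v) (inr 3) := by omega
          _ ≤ ecc H (inl v) := Finset.le_sup (Finset.mem_univ _)
      · have h := flow (inl v) (inr 1)
        simp [fpot, if_neg hv] at h
        calc (3:ℕ) ≤ H.dist (inl v) (inr 1) := by omega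
          _ ≤ ecc H (inl v) := Finset.le_sup (Finset.mem_univ _)
  have ecc0 : ecc H (inr 0) = 4 := by
    apply le_antisymm
    · apply Finset.sup_le
      rintro (u | i) -
      · exact (SimpleGraph.dist_comm .. ▸ dl0 u).trans (by norm_num)
      · revert i
        refine fin4cases ?_ ?_ ?_ ?_
        · simp [SimpleGraph.dist_self]
        · exact d01.trans (by norm_num)
        · exact d02.trans (by norm_num)
        · exact d03
    · calc (4:ℕ) ≤ H.dist (inr 0) (inr 3) := L03
        _ ≤ ecc H (inr 0) := Finset.le_sup (Finset.mem_univ _)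
  have ecc1 : ecc H (inr 1) = 5 := by
    apply le_antisymm
    · apply Finset.sup_le
      rintro (u | i) -
      · exact (d1l u).trans (by norm_num)
      · revert i
        refine fin4cases ?_ ?_ ?_ ?_
        · exact d10.trans (by norm_num)
        · simp [SimpleGraph.dist_self]
        · exact d12.trans (by norm_num)
        · exact d13
    · calc (5:ℕ) ≤ H.dist (inr 1) (inr 3) := L13
        _ ≤ ecc H (inr 1) := Finset.le_sup (Finset.mem_univ _)
  have ecc2 : ecc H (inr 2) = 4 := by
    apply le_antisymm
    · apply Finset.sup_le
      rintro (u | i) -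
      · exact (SimpleGraph.dist_comm .. ▸ dl2 u).trans (by norm_num)
      · revert i
        refine fin4cases ?_ ?_ ?_ ?_
        · exact (SimpleGraph.dist_comm .. ▸ d02).trans (by norm_num)
        · exact SimpleGraph.dist_comm .. ▸ d12
        · simp [SimpleGraph.dist_self]
        · exact d23.trans (by norm_num)
    · calc (4:ℕ) ≤ H.dist (inr 2) (inr 1) := L21
        _ ≤ ecc H (inr 2) := Finset.le_sup (Finset.mem_univ _)
  have ecc3 : ecc H (inr 3) = 5 := by
    apply le_antisymm
    · apply Finset.sup_le
      rintro (u | i) -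
      · exact (d3l u).trans (by norm_num)
      · revert i
        refine fin4cases ?_ ?_ ?_ ?_
        · exact (SimpleGraph.dist_comm .. ▸ d03).trans (by norm_num)
        · exact SimpleGraph.dist_comm .. ▸ d13
        · exact (SimpleGraph.dist_comm .. ▸ d23).trans (by norm_num)
        · simp [SimpleGraph.dist_self]
    · calc (5:ℕ) ≤ H.dist (inr 3) (inr 1) := SimpleGraph.dist_comm .. ▸ L13
        _ ≤ ecc H (inr 3) := Finset.le_sup (Finset.mem_univ _)
  have hgrad : grad H = 3 := by
    apply le_antisymm
    · exact Nat.sInf_le (Set.mem_range.mpr ⟨inl v₀, eccl v₀⟩)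
    · apply le_csInf ⟨3, Set.mem_range.mpr ⟨inl v₀, eccl v₀⟩⟩
      rintro e ⟨x, rfl⟩
      rcases x with v | i
      · rw [eccl]
      · revert i
        refine fin4cases ?_ ?_ ?_ ?_
        · rw [ecc0]; norm_num
        · rw [ecc1]; norm_num
        · rw [ecc2]; norm_num
        · rw [ecc3]; norm_num
  refine ⟨?_, hgrad, ?_, ?_⟩
  · -- chordality
    rintro n hn ⟨h3n, f, hinj, hadj⟩
    have hfz : ∀ k : ℕ, 0 < k → k < n → ((k : ℕ) : ZMod n) ≠ 0 := by
      intro k hk hkn h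
      have hdvd := (ZMod.natCast_eq_zero_iff k n).mp h
      have := Nat.le_of_dvd hk hdvd
      omega
    have hone : (1 : ZMod n) ≠ 0 := by simpa using hfz 1 (by omega) (by omega)
    have htwo : (2 : ZMod n) ≠ 0 := by simpa using hfz 2 (by omega) (by omega)
    have hthree : (3 : ZMod n) ≠ 0 := by simpa using hfz 3 (by omega) (by omega)
    have hne2 : ∀ i : ZMod n, i + 1 ≠ i - 1 := fun i h => htwo (by linear_combination h)
    have adjfwd : ∀ i, H.Adj (f i) (f (i + 1)) := fun i => (hadj i (i + 1)).mpr (Or.inr rfl)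
    have adjbwd : ∀ i, H.Adj (f i) (f (i - 1)) := fun i => (hadj i (i - 1)).mpr (Or.inl (by ring))
    have no1 : ∀ i, f i ≠ inr 1 := by
      intro i hfi
      have hA := adjfwd i; have hB := adjbwd i
      rw [hfi] at hA hB
      exact hne2 i (hinj ((nbr1 hA.symm).trans (nbr1 hB.symm).symm))
    have no3 : ∀ i, f i ≠ inr 3 := by
      intro i hfi
      have hA := adjfwd i; have hB := adjbwd i
      rw [hfi] at hA hB
      exact hne2 i (hinj ((nbr3 hA.symm).trans (nbr3 hB.symm).symm))
    have key : ∀ i, ∃ a, f i = inl a := by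
      intro i
      rcases hfi : f i with a | k
      · exact ⟨a, rfl⟩
      exfalso
      have hA := adjfwd i; have hB := adjbwd i
      rw [hfi] at hA hB
      revert hA hB hfi
      revert k
      refine fin4cases ?_ ?_ ?_ ?_
      · intro hfi hA hB
        rcases nbr0 hA.symm with e1 | ⟨a, haW, e1⟩
        · exact no1 _ e1
        rcases nbr0 hB.symm with e2 | ⟨b, hbW, e2⟩
        · exact no1 _ e2
        have hab : a ≠ b := fun h => hne2 i (hinj (by rw [e1, e2, h]))
        have hGab : G.Adj a b := h1 haW hbW hab
        have hHab : H.Adj (f (i + 1)) (f (i - 1)) := by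
          rw [e1, e2]; exact adj_ll.mpr hGab
        rcases (hadj _ _).mp hHab with h' | h'
        · exact hone (by linear_combination h')
        · exact hthree (by linear_combination -h')
      · intro hfi _ _
        exact no1 i hfi
      · intro hfi hA hB
        rcases nbr2 hA.symm with e1 | ⟨a, haW, e1⟩
        · exact no3 _ e1
        rcases nbr2 hB.symm with e2 | ⟨b, hbW, e2⟩
        · exact no3 _ e2
        have hab : a ≠ b := fun h => hne2 i (hinj (by rw [e1, e2, h]))
        have hGab : G.Adj a b := h2 haW hbW hab
        have hHab : H.Adj (f (i + 1)) (f (i - 1)) := by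
          rw [e1, e2]; exact adj_ll.mpr hGab
        rcases (hadj _ _).mp hHab with h' | h'
        · exact hone (by linear_combination h')
        · exact hthree (by linear_combination -h')
      · intro hfi _ _
        exact no3 i hfi
    choose g hg using key
    refine hch n hn ⟨by omega, g, fun i j hij => hinj (by rw [hg i, hg j, hij]), fun i j => ?_⟩
    have hiff : G.Adj (g i) (g j) ↔ H.Adj (f i) (f j) := by
      rw [hg i, hg j]; exact adj_ll.symm
    rw [hiff]; exact hadj i j
  · -- diameter
    apply le_antisymm
    · apply Finset.sup_le
      rintro (v | i) -
      · rw [eccl]; norm_num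
      · revert i
        refine fin4cases ?_ ?_ ?_ ?_
        · rw [ecc0]; norm_num
        · rw [ecc1]
        · rw [ecc2]; norm_num
        · rw [ecc3]
    · calc (5:ℕ) = ecc H (inr 1) := ecc1.symm
        _ ≤ gdiam H := Finset.le_sup (Finset.mem_univ _)
  · -- center
    ext x
    simp only [_root_.center, Set.mem_setOf_eq, hgrad, Set.mem_range]
    rcases x with v | i
    · exact iff_of_true (eccl v) ⟨v, rfl⟩
    · constructor
      · intro h
        exfalso
        revert h
        revert i
        refine fin4cases ?_ ?_ ?_ ?_
        · rw [ecc0]; omega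
        · rw [ecc1]; omega
        · rw [ecc2]; omega
        · rw [ecc3]; omega
      · rintro ⟨a, ha⟩
        exact absurd ha (by simp)
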